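/- In a left Bol loop with multiplication groups, the left and right Bol identities give the translation identities R_{xz}R_x^{-1} = L_x^{-1} R_z L_x (right Bol) and L_{xy}L_y^{-1} = R_y^{-1} L_x R_y (left Bol); consequently, in a Moufang loop both LMlt(Q) and RMlt(Q) are normal subgroups of the full multiplication group Mlt(Q). -/
import Mathlib


lemma conj_closure_mem {M : Type*} [Group M] (S T : Set M)
    (h : ∀ t ∈ S, ∀ s ∈ T,
      t * s * t⁻¹ ∈ Subgroup.closure T ∧ t⁻¹ * s * t ∈ Subgroup.closure T) :
    ∀ g ∈ Subgroup.closure S, ∀ k ∈ Subgroup.closure T, g * k * g⁻¹ ∈ Subgroup.closure T := by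
  classical
  set K := Subgroup.closure T with hK
  have single : ∀ m : M, (∀ s ∈ T, m * s * m⁻¹ ∈ K) → ∀ k ∈ K, m * k * m⁻¹ ∈ K := by
    intro m hm k hk
    have : K.map (MulAut.conj m).toMonoidHom ≤ K := by
      rw [hK, MonoidHom.map_closure, Subgroup.closure_le]
      rintro y ⟨s, hs, rfl⟩
      simpa [MulAut.conj] using hm s hs
    exact this ⟨k, hk, by simp [MulAut.conj]⟩
  intro g hg
  refine Subgroup.closure_induction
    (p := fun g _ => (∀ k ∈ K, g * k * g⁻¹ ∈ K) ∧ (∀ k ∈ K, g⁻¹ * k * g ∈ K))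
    ?_ ?_ ?_ ?_ hg |>.1
  · intro t ht
    constructor
    · exact single t (fun s hs => (h t ht s hs).1)
    · have := single t⁻¹ (fun s hs => by simpa using (h t ht s hs).2)
      simpa using this
  · simp
  · intro x y hx hy ⟨hx1, hx2⟩ ⟨hy1, hy2⟩
    constructor
    · intro k hk
      have : x * (y * k * y⁻¹) * x⁻¹ ∈ K := hx1 _ (hy1 k hk)
      simpa [mul_assoc] using this
    · intro k hk
      have : y⁻¹ * (x⁻¹ * k * x) * y ∈ K := hy2 _ (hx2 k hk)
      simpa [mul_assoc] using this
  · intro x hx ⟨hx1, hx2⟩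
    exact ⟨by simpa using hx2, by simpa using hx1⟩

/-- In a loop, the right Bol identity yields `R_{xz}R_x⁻¹ = L_x⁻¹R_zL_x` and the
left Bol identity yields `L_{xy}L_y⁻¹ = R_y⁻¹L_xR_y`; consequently, in a Moufang loop (both
identities) the left and right multiplication groups are normal in the full multiplication
group. -/
theorem stmt18 (Q : Type) [Mul Q] [One Q]
    (h1 : ∀ a : Q, 1 * a = a) (h2 : ∀ a : Q, a * 1 = a)
    (L : Q → Equiv.Perm Q) (hL : ∀ a x : Q, L a x = a * x)
    (R : Q → Equiv.Perm Q) (hR : ∀ a x : Q, R a x = x * a)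
    (hLeftBol : ∀ x y z : Q, x * (y * (x * z)) = (x * (y * x)) * z)
    (hRightBol : ∀ x y z : Q, ((x * y) * z) * y = x * ((y * z) * y)) :
    (∀ x z : Q, R (x * z) * (R x)⁻¹ = (L x)⁻¹ * R z * L x) ∧
    (∀ x y : Q, L (x * y) * (L y)⁻¹ = (R y)⁻¹ * L x * R y) ∧
    ((Subgroup.closure (Set.range L)).subgroupOf
        (Subgroup.closure (Set.range L ∪ Set.range R))).Normal ∧
    ((Subgroup.closure (Set.range R)).subgroupOf
        (Subgroup.closure (Set.range L ∪ Set.range R))).Normal := by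
  -- cancellation
  have hLinj : ∀ a : Q, Function.Injective (fun z => a * z) := by
    intro a u v huv
    have : L a u = L a v := by rw [hL, hL]; exact huv
    exact (L a).injective this
  have hRinj : ∀ a : Q, Function.Injective (fun z => z * a) := by
    intro a u v huv
    have : R a u = R a v := by rw [hR, hR]; exact huv
    exact (R a).injective this
  -- the two translation identities
  have hA : ∀ x z : Q, R (x * z) * (R x)⁻¹ = (L x)⁻¹ * R z * L x := by
    intro x z
    have h : L x * R (x * z) = R z * L x * R x := by
      ext w
      simp only [Equiv.Perm.mul_apply, hL, hR]
      exact hLeftBol x w z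
    calc R (x * z) * (R x)⁻¹
        = (L x)⁻¹ * (L x * R (x * z)) * (R x)⁻¹ := by group
      _ = (L x)⁻¹ * (R z * L x * R x) * (R x)⁻¹ := by rw [h]
      _ = (L x)⁻¹ * R z * L x := by group
  have hB : ∀ x y : Q, L (x * y) * (L y)⁻¹ = (R y)⁻¹ * L x * R y := by
    intro x y
    have h : R y * L (x * y) = L x * R y * L y := by
      ext w
      simp only [Equiv.Perm.mul_apply, hL, hR]
      exact hRightBol x y w
    calc L (x * y) * (L y)⁻¹
        = (R y)⁻¹ * (R y * L (x * y)) * (L y)⁻¹ := by group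
      _ = (R y)⁻¹ * (L x * R y * L y) * (L y)⁻¹ := by rw [h]
      _ = (R y)⁻¹ * L x * R y := by group
  refine ⟨hA, hB, ?_⟩
  -- inverses
  set inv : Q → Q := fun x => (L x).symm 1 with hinv
  have hinvR : ∀ x : Q, x * inv x = 1 := by
    intro x
    have := (L x).apply_symm_apply 1
    rwa [hL] at this
  -- left inverse property element: lam x * x = 1
  set lam : Q → Q := fun x => (R x).symm 1 with hlam
  have hlamL : ∀ x : Q, lam x * x = 1 := by
    intro x
    have := (R x).apply_symm_apply 1
    rwa [hR] at this
  have hLIP : ∀ x z : Q, lam x * (x * z) = z := by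
    intro x z
    have := hLeftBol x (lam x) z
    rw [hlamL, h2] at this
    exact hLinj x this
  have lam_eq_inv : ∀ x : Q, lam x = inv x := by
    intro x
    have := hLIP x (inv x)
    rw [hinvR, h2] at this
    exact this
  have hinvL : ∀ x : Q, inv x * x = 1 := fun x => by rw [← lam_eq_inv]; exact hlamL x
  have hLIP' : ∀ x z : Q, inv x * (x * z) = z := by
    intro x z; rw [← lam_eq_inv]; exact hLIP x z
  have hinvinv : ∀ x : Q, inv (inv x) = x := by
    intro x
    have h1' : inv x * inv (inv x) = 1 := hinvR (inv x)
    have h2' : inv x * x = 1 := hinvL x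
    exact hLinj (inv x) (h1'.trans h2'.symm)
  have hLIP'' : ∀ x z : Q, x * (inv x * z) = z := by
    intro x z
    have := hLIP' (inv x) z
    rwa [hinvinv] at this
  -- right inverse property
  have hRIP : ∀ x y : Q, (x * y) * inv y = x := by
    intro x y
    have := hRightBol x y (inv y)
    rw [hinvR, h1] at this
    exact hRinj y this
  have hRIP' : ∀ x y : Q, (x * inv y) * y = x := by
    intro x y
    have := hRIP x (inv y)
    rwa [hinvinv] at this
  -- permutation inverses
  have hLinv : ∀ x : Q, (L x)⁻¹ = L (inv x) := by
    intro x
    refine inv_eq_of_mul_eq_one_right ?_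
    ext w
    simp only [Equiv.Perm.mul_apply, hL, Equiv.Perm.one_apply]
    exact hLIP'' x w
  have hRinv : ∀ x : Q, (R x)⁻¹ = R (inv x) := by
    intro x
    refine inv_eq_of_mul_eq_one_right ?_
    ext w
    simp only [Equiv.Perm.mul_apply, hR, Equiv.Perm.one_apply]
    exact hRIP' w x
  -- subgroups
  set KL := Subgroup.closure (Set.range L) with hKL
  set KR := Subgroup.closure (Set.range R) with hKR
  have memL : ∀ a : Q, L a ∈ KL := fun a => Subgroup.subset_closure ⟨a, rfl⟩
  have memR : ∀ a : Q, R a ∈ KR := fun a => Subgroup.subset_closure ⟨a, rfl⟩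
  -- conjugation facts for KL
  have conjRL : ∀ y x : Q, (R y)⁻¹ * L x * R y ∈ KL := by
    intro y x
    rw [← hB, hLinv]
    exact mul_mem (memL _) (memL _)
  have conjLKL : ∀ t ∈ Set.range L ∪ Set.range R, ∀ s ∈ Set.range L,
      t * s * t⁻¹ ∈ KL ∧ t⁻¹ * s * t ∈ KL := by
    rintro t ht s ⟨x, rfl⟩
    rcases ht with ⟨y, rfl⟩ | ⟨y, rfl⟩
    · constructor
      · rw [hLinv]; exact mul_mem (mul_mem (memL _) (memL _)) (memL _)
      · rw [hLinv]; exact mul_mem (mul_mem (memL _) (memL _)) (memL _)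
    · constructor
      · have := conjRL (inv y) x
        rwa [hRinv, hinvinv, ← hRinv] at this
      · exact conjRL y x
  -- conjugation facts for KR
  have conjLR : ∀ x z : Q, (L x)⁻¹ * R z * L x ∈ KR := by
    intro x z
    rw [← hA, hRinv]
    exact mul_mem (memR _) (memR _)
  have conjRKR : ∀ t ∈ Set.range L ∪ Set.range R, ∀ s ∈ Set.range R,
      t * s * t⁻¹ ∈ KR ∧ t⁻¹ * s * t ∈ KR := by
    rintro t ht s ⟨z, rfl⟩
    rcases ht with ⟨x, rfl⟩ | ⟨x, rfl⟩
    · constructor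
      · have := conjLR (inv x) z
        rwa [hLinv, hinvinv, ← hLinv] at this
      · exact conjLR x z
    · constructor
      · rw [hRinv]; exact mul_mem (mul_mem (memR _) (memR _)) (memR _)
      · rw [hRinv]; exact mul_mem (mul_mem (memR _) (memR _)) (memR _)
  have mainL := conj_closure_mem (Set.range L ∪ Set.range R) (Set.range L) conjLKL
  have mainR := conj_closure_mem (Set.range L ∪ Set.range R) (Set.range R) conjRKR
  constructor
  · constructor
    intro n hn g
    rw [Subgroup.mem_subgroupOf] at hn ⊢
    exact mainL g.1 g.2 n.1 hn
  · constructor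
    intro n hn g
    rw [Subgroup.mem_subgroupOf] at hn ⊢
    exact mainR g.1 g.2 n.1 hn
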